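/- arXiv:1807.02571 — 2 statements merged into one kernel-verified Lean document; each statement's English description precedes it below -/
import Mathlib

section
/- Let x, y ∈ ℝ^n and ε > 0. Define x̄_i = x_i if |x_i| > (ε/2)·‖x‖_1 and x̄_i = 0 otherwise, and define ȳ analogously with ‖y‖_1. Then |⟨x,y⟩ − ⟨x̄,ȳ⟩| ≤ ε·‖x‖_1·‖y‖_1. -/
theorem truncated_inner_product_rescaled {n : ℕ} (ε : ℝ) (hε : 0 < ε)
    (x y : Fin n → ℝ) :
    |(∑ i, x i * y i) -
        ∑ i, (if |x i| > ε / 2 * ∑ i', |x i'| then x i else 0) *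
             (if |y i| > ε / 2 * ∑ i', |y i'| then y i else 0)|
      ≤ ε * (∑ i, |x i|) * ∑ i, |y i| := by
  set X := ∑ i', |x i'| with hX
  set Y := ∑ i', |y i'| with hY
  have hX0 : 0 ≤ X := Finset.sum_nonneg fun i _ => abs_nonneg _
  have hY0 : 0 ≤ Y := Finset.sum_nonneg fun i _ => abs_nonneg _
  rw [← Finset.sum_sub_distrib]
  calc |∑ i, (x i * y i -
        (if |x i| > ε / 2 * X then x i else 0) *
        (if |y i| > ε / 2 * Y then y i else 0))|
      ≤ ∑ i, |x i * y i -
        (if |x i| > ε / 2 * X then x i else 0) *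
        (if |y i| > ε / 2 * Y then y i else 0)| := Finset.abs_sum_le_sum_abs _ _
    _ ≤ ∑ i, (ε / 2 * X * |y i| + ε / 2 * Y * |x i|) := by
        apply Finset.sum_le_sum
        intro i _
        by_cases hx : |x i| > ε / 2 * X
        · by_cases hy : |y i| > ε / 2 * Y
          · simp only [hx, hy, if_pos]
            have : x i * y i - x i * y i = 0 := by ring
            rw [this, abs_zero]
            positivity
          · simp only [hx, if_pos, hy, if_neg, not_false_iff, mul_zero, sub_zero]
            have h1 : |x i * y i| = |x i| * |y i| := abs_mul _ _
            have hy' : |y i| ≤ ε / 2 * Y := not_lt.mp hy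
            nlinarith [abs_nonneg (x i), abs_nonneg (y i), mul_nonneg hX0 (abs_nonneg (y i))]
        · simp only [hx, if_neg, not_false_iff, zero_mul, sub_zero]
          have h1 : |x i * y i| = |x i| * |y i| := abs_mul _ _
          have hx' : |x i| ≤ ε / 2 * X := not_lt.mp hx
          nlinarith [abs_nonneg (x i), abs_nonneg (y i), mul_nonneg hY0 (abs_nonneg (x i))]
    _ = ε * X * Y := by
        rw [Finset.sum_add_distrib, ← Finset.mul_sum, ← Finset.mul_sum, ← hX, ← hY]
        ring
end

section
/- Let A, B ∈ ℝ^{n×d} and ε > 0. For a matrix X define X̄ by X̄_{ij} = X_{ij} if |X_{ij}| > (ε/2)·‖X_i‖_1 (where X_i is the i-th row) and X̄_{ij} = 0 otherwise. Then ‖A B^T − Ā B̄^T‖_1 ≤ ε·‖A‖_1·‖B‖_1, where ‖·‖_1 denotes the entrywise 1-norm of a matrix. -/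
open Matrix

/-- Row-wise truncation of a matrix: zero out entries of magnitude at most
(ε/2) times the 1-norm of their row. -/
noncomputable def truncate {n d : ℕ} (ε : ℝ) (X : Matrix (Fin n) (Fin d) ℝ) :
    Matrix (Fin n) (Fin d) ℝ :=
  fun i j => if |X i j| > ε / 2 * ∑ k, |X i k| then X i j else 0

private lemma trunc_inner {d : ℕ} (ε : ℝ) (a b : Fin d → ℝ)
    (abar bbar : Fin d → ℝ)
    (ha1 : ∀ k, |a k - abar k| ≤ ε / 2 * ∑ t, |a t|)
    (ha2 : ∀ k, |abar k| ≤ |a k|)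
    (hb1 : ∀ k, |b k - bbar k| ≤ ε / 2 * ∑ t, |b t|) :
    |∑ k, a k * b k - ∑ k, abar k * bbar k|
      ≤ ε * (∑ t, |a t|) * ∑ t, |b t| := by
  have key : ∑ k, a k * b k - ∑ k, abar k * bbar k
      = ∑ k, ((a k - abar k) * b k + abar k * (b k - bbar k)) := by
    rw [← Finset.sum_sub_distrib]; congr 1; funext k; ring
  rw [key]
  calc |∑ k, ((a k - abar k) * b k + abar k * (b k - bbar k))|
      ≤ ∑ k, |(a k - abar k) * b k + abar k * (b k - bbar k)| :=
        Finset.abs_sum_le_sum_abs _ _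
    _ ≤ ∑ k, ((ε / 2 * ∑ t, |a t|) * |b k| + |a k| * (ε / 2 * ∑ t, |b t|)) := by
        apply Finset.sum_le_sum
        intro k _
        calc |(a k - abar k) * b k + abar k * (b k - bbar k)|
            ≤ |(a k - abar k) * b k| + |abar k * (b k - bbar k)| := abs_add_le _ _
          _ = |a k - abar k| * |b k| + |abar k| * |b k - bbar k| := by
              rw [abs_mul, abs_mul]
          _ ≤ (ε / 2 * ∑ t, |a t|) * |b k| + |a k| * (ε / 2 * ∑ t, |b t|) :=
              add_le_add (mul_le_mul_of_nonneg_right (ha1 k) (abs_nonneg _))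
                (mul_le_mul (ha2 k) (hb1 k) (abs_nonneg _) (abs_nonneg _))
    _ = ε * (∑ t, |a t|) * ∑ t, |b t| := by
        rw [Finset.sum_add_distrib, ← Finset.mul_sum, ← Finset.sum_mul]
        ring

theorem approximate_matrix_multiplication {n d : ℕ} (ε : ℝ) (hε : 0 < ε)
    (A B : Matrix (Fin n) (Fin d) ℝ) :
    ∑ i, ∑ j, |(A * Bᵀ) i j - (truncate ε A * (truncate ε B)ᵀ) i j|
      ≤ ε * (∑ i, ∑ j, |A i j|) * ∑ i, ∑ j, |B i j| := by
  have hpt : ∀ (X : Matrix (Fin n) (Fin d) ℝ) i k,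
      |X i k - truncate ε X i k| ≤ ε / 2 * ∑ t, |X i t| := by
    intro X i k
    unfold truncate
    split_ifs with h
    · simpa using mul_nonneg (by linarith : (0:ℝ) ≤ ε / 2)
        (Finset.sum_nonneg fun t _ => abs_nonneg _)
    · push_neg at h; simp only [sub_zero]; exact h
  have hpt2 : ∀ (X : Matrix (Fin n) (Fin d) ℝ) i k,
      |truncate ε X i k| ≤ |X i k| := by
    intro X i k
    unfold truncate
    split_ifs with h
    · exact le_rfl
    · simpa using abs_nonneg _
  calc ∑ i, ∑ j, |(A * Bᵀ) i j - (truncate ε A * (truncate ε B)ᵀ) i j|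
      ≤ ∑ i, ∑ j, ε * (∑ t, |A i t|) * ∑ t, |B j t| := by
        apply Finset.sum_le_sum; intro i _
        apply Finset.sum_le_sum; intro j _
        simp only [Matrix.mul_apply, Matrix.transpose_apply]
        exact trunc_inner ε (A i) (B j) (truncate ε A i) (truncate ε B j)
          (hpt A i) (hpt2 A i) (hpt B j)
    _ = ε * (∑ i, ∑ j, |A i j|) * ∑ i, ∑ j, |B i j| := by
        simp only [← Finset.sum_mul, ← Finset.mul_sum]
end
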